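/- For the geometric Borel function f̂(t) = 1/(1 - a t) with a < 0, the Laplace integral ∫_0^∞ e^{-t} f̂(g t) dt converges for all g > 0, and the function f_B(g) so defined has asymptotic expansion ∑ n! a^n g^n as g → 0⁺, i.e. for each N, f_B(g) - ∑_{n<N} n! a^n g^n = O(g^N). -/

import Mathlib

open MeasureTheory Filter Topology Asymptotics

private lemma powExp_integrable (n : ℕ) :
    MeasureTheory.IntegrableOn (fun t : ℝ => Real.exp (-t) * t ^ n) (Set.Ici 0) := by
  rw [integrableOn_Ici_iff_integrableOn_Ioi]
  have := Real.GammaIntegral_convergent (s := (n : ℝ) + 1) (by positivity)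
  refine this.congr_fun (fun t ht => ?_) measurableSet_Ioi
  simp only [add_sub_cancel_right, Real.rpow_natCast]

private lemma powExp_integral (n : ℕ) :
    ∫ t in Set.Ici (0:ℝ), Real.exp (-t) * t ^ n = (n.factorial : ℝ) := by
  rw [MeasureTheory.integral_Ici_eq_integral_Ioi]
  have h := Real.Gamma_eq_integral (s := (n : ℝ) + 1) (by positivity)
  rw [Real.Gamma_nat_eq_factorial] at h
  rw [← h.symm]
  · exact MeasureTheory.setIntegral_congr_fun measurableSet_Ioi fun t ht => by
      rw [add_sub_cancel_right, Real.rpow_natCast]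

theorem stmt_3 (a : ℝ) (ha : a < 0) :
    (∀ g : ℝ, 0 < g → MeasureTheory.IntegrableOn
      (fun t : ℝ => Real.exp (-t) * (1 / (1 - a * (g * t)))) (Set.Ici 0)) ∧
    ∀ N : ℕ,
      (fun g : ℝ => (∫ t in Set.Ici (0:ℝ), Real.exp (-t) * (1 / (1 - a * (g * t)))) -
        ∑ n ∈ Finset.range N, (n.factorial : ℝ) * a^n * g^n)
      =O[𝓝[>] (0:ℝ)] fun g : ℝ => g^N := by
  -- basic facts
  have hden : ∀ g t : ℝ, 0 ≤ g → 0 ≤ t → 1 ≤ 1 - a * (g * t) := by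
    intro g t hg ht
    nlinarith [mul_nonneg hg ht]
  have hmeas : ∀ g : ℝ, AEStronglyMeasurable
      (fun t : ℝ => Real.exp (-t) * (1 / (1 - a * (g * t))))
      (volume.restrict (Set.Ici 0)) := by
    intro g
    apply Measurable.aestronglyMeasurable
    fun_prop
  have hint : ∀ g : ℝ, 0 < g → MeasureTheory.IntegrableOn
      (fun t : ℝ => Real.exp (-t) * (1 / (1 - a * (g * t)))) (Set.Ici 0) := by
    intro g hg
    refine MeasureTheory.Integrable.mono' (by have := powExp_integrable 0; simp at this; exact this) (hmeas g) ?_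
    rw [MeasureTheory.ae_restrict_iff' measurableSet_Ici]
    filter_upwards with t ht
    have h1 := hden g t hg.le ht
    have h0 : 0 < 1 - a * (g * t) := by linarith
    rw [Real.norm_eq_abs, abs_mul, abs_of_pos (Real.exp_pos _), abs_of_pos (by positivity)]
    calc Real.exp (-t) * (1 / (1 - a * (g * t))) ≤ Real.exp (-t) * 1 := by
          gcongr
          rw [div_le_one h0]; linarith
      _ = Real.exp (-t) := mul_one _
  refine ⟨hint, fun N => ?_⟩
  rw [Asymptotics.isBigO_iff]
  refine ⟨(N.factorial : ℝ) * |a| ^ N, ?_⟩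
  filter_upwards [self_mem_nhdsWithin] with g hg
  simp only [Set.mem_Ioi] at hg
  -- remainder function
  set r : ℝ → ℝ := fun t => Real.exp (-t) * ((a * (g * t)) ^ N / (1 - a * (g * t))) with hr
  have hrmeas : AEStronglyMeasurable r (volume.restrict (Set.Ici 0)) := by
    apply Measurable.aestronglyMeasurable; fun_prop
  have hrbound : ∀ t : ℝ, 0 ≤ t → ‖r t‖ ≤ Real.exp (-t) * ((|a| * g) ^ N * t ^ N) := by
    intro t ht
    have h1 := hden g t hg.le ht
    have h0 : 0 < 1 - a * (g * t) := by linarith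
    rw [hr, Real.norm_eq_abs, abs_mul, abs_of_pos (Real.exp_pos _), abs_div, abs_of_pos h0,
      abs_pow]
    have : |a * (g * t)| ^ N / (1 - a * (g * t)) ≤ |a * (g * t)| ^ N := by
      apply div_le_self (by positivity) h1
    calc Real.exp (-t) * (|a * (g * t)| ^ N / (1 - a * (g * t)))
        ≤ Real.exp (-t) * |a * (g * t)| ^ N := by gcongr
      _ = Real.exp (-t) * ((|a| * g) ^ N * t ^ N) := by
          rw [abs_mul, abs_mul, abs_of_pos hg, abs_of_nonneg ht]; ring
  have hbint : MeasureTheory.IntegrableOn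
      (fun t : ℝ => Real.exp (-t) * ((|a| * g) ^ N * t ^ N)) (Set.Ici 0) := by
    have h2 : MeasureTheory.IntegrableOn
        (fun t : ℝ => (|a| * g) ^ N * (Real.exp (-t) * t ^ N)) (Set.Ici 0) :=
      (powExp_integrable N).const_mul ((|a| * g) ^ N)
    refine h2.congr_fun (fun t _ => by ring) measurableSet_Ici
  have hrint : MeasureTheory.IntegrableOn r (Set.Ici 0) := by
    refine MeasureTheory.Integrable.mono' hbint hrmeas ?_
    rw [MeasureTheory.ae_restrict_iff' measurableSet_Ici]
    filter_upwards with t ht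
    exact hrbound t ht
  -- the sum part
  set s : ℝ → ℝ := fun t => ∑ n ∈ Finset.range N, Real.exp (-t) * (a * (g * t)) ^ n with hs
  have hsint : MeasureTheory.IntegrableOn s (Set.Ici 0) := by
    apply MeasureTheory.integrable_finset_sum
    intro n _
    have h2 : MeasureTheory.IntegrableOn
        (fun t : ℝ => (a * g) ^ n * (Real.exp (-t) * t ^ n)) (Set.Ici 0) :=
      (powExp_integrable n).const_mul ((a * g) ^ n)
    refine h2.congr_fun (fun t _ => by ring) measurableSet_Ici
  -- pointwise decomposition
  have hdecomp : ∀ t ∈ Set.Ici (0:ℝ),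
      Real.exp (-t) * (1 / (1 - a * (g * t))) = s t + r t := by
    intro t ht
    simp only [Set.mem_Ici] at ht
    have h1 := hden g t hg.le ht
    have h0 : (1 : ℝ) - a * (g * t) ≠ 0 := by linarith
    have hx1 : a * (g * t) ≠ 1 := by nlinarith
    have key : ∀ x : ℝ, x ≠ 1 → 1/(1-x) = (x^N - 1)/(x-1) + x^N/(1-x) := by
      intro x hx
      have hx' : x - 1 ≠ 0 := sub_ne_zero.mpr hx
      have hx'' : 1 - x ≠ 0 := fun h => hx' (by linarith [h])
      field_simp
      ring
    simp only [hs, hr]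
    rw [← Finset.mul_sum, geom_sum_eq hx1, ← mul_add, ← key _ hx1]
  have hIeq : (∫ t in Set.Ici (0:ℝ), Real.exp (-t) * (1 / (1 - a * (g * t))))
      = (∫ t in Set.Ici (0:ℝ), s t) + ∫ t in Set.Ici (0:ℝ), r t := by
    rw [MeasureTheory.setIntegral_congr_fun measurableSet_Ici hdecomp,
      MeasureTheory.integral_add hsint hrint]
  have hsval : (∫ t in Set.Ici (0:ℝ), s t)
      = ∑ n ∈ Finset.range N, (n.factorial : ℝ) * a ^ n * g ^ n := by
    rw [hs, MeasureTheory.integral_finset_sum]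
    · refine Finset.sum_congr rfl fun n _ => ?_
      have : (∫ t in Set.Ici (0:ℝ), Real.exp (-t) * (a * (g * t)) ^ n)
          = ∫ t in Set.Ici (0:ℝ), (a * g) ^ n * (Real.exp (-t) * t ^ n) := by
        refine MeasureTheory.setIntegral_congr_fun measurableSet_Ici fun t _ => by ring
      rw [this, MeasureTheory.integral_const_mul, powExp_integral]
      ring
    · intro n _
      have h2 : MeasureTheory.IntegrableOn
          (fun t : ℝ => (a * g) ^ n * (Real.exp (-t) * t ^ n)) (Set.Ici 0) :=
        (powExp_integrable n).const_mul ((a * g) ^ n)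
      refine h2.congr_fun (fun t _ => by ring) measurableSet_Ici
  rw [hIeq, hsval]
  simp only [add_sub_cancel_left]
  -- bound the remainder integral
  have hrle : ‖∫ t in Set.Ici (0:ℝ), r t‖ ≤
      ∫ t in Set.Ici (0:ℝ), Real.exp (-t) * ((|a| * g) ^ N * t ^ N) := by
    refine MeasureTheory.norm_integral_le_of_norm_le hbint ?_
    rw [MeasureTheory.ae_restrict_iff' measurableSet_Ici]
    filter_upwards with t ht
    exact hrbound t ht
  have hbval : (∫ t in Set.Ici (0:ℝ), Real.exp (-t) * ((|a| * g) ^ N * t ^ N))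
      = (|a| * g) ^ N * (N.factorial : ℝ) := by
    have : (∫ t in Set.Ici (0:ℝ), Real.exp (-t) * ((|a| * g) ^ N * t ^ N))
        = ∫ t in Set.Ici (0:ℝ), (|a| * g) ^ N * (Real.exp (-t) * t ^ N) := by
      refine MeasureTheory.setIntegral_congr_fun measurableSet_Ici fun t _ => by ring
    rw [this, MeasureTheory.integral_const_mul, powExp_integral]
  rw [hbval] at hrle
  calc ‖∫ t in Set.Ici (0:ℝ), r t‖ ≤ (|a| * g) ^ N * (N.factorial : ℝ) := hrle
    _ = (N.factorial : ℝ) * |a| ^ N * ‖g ^ N‖ := by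
        rw [Real.norm_eq_abs, abs_pow, abs_of_pos hg, mul_pow]; ring
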